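/- Let f : ℝ^d → ℝ be continuously differentiable and let γ, α, ρ, δt > 0. A point (x, p, ξ) ∈ ℝ^d × ℝ^d × ℝ^d with ξ ≥ 0 componentwise is a fixed point of the discrete iKFAD iteration (i.e., one step of the iteration maps (x, p, ξ) to itself) if and only if p = 0, ξ = 0, and ∇f(x) = 0, i.e., if and only if it is an equilibrium of the continuous iKFAD dynamics. -/
import Mathlib


/-- A point `(x, p, ξ)` with `ξ ≥ 0` componentwise is a fixed point of one step
of the discrete iKFAD iteration
`p⁺ = e^{-(γ+ξᵢ)δt} pᵢ - δt (∇f(x))ᵢ`,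
`x⁺ = xᵢ + δt e^{-(γ+ξᵢ)δt} pᵢ - δt² (∇f(x))ᵢ`,
`ξ⁺ = e^{-αδt} √(ξᵢ² + (1 - e^{-2ξᵢδt}) pᵢ²/ρ)`
iff `p = 0`, `ξ = 0`, and `∇f(x) = 0`, i.e. iff it is an equilibrium of the
continuous iKFAD dynamics. -/
theorem ikfad_discrete_fixed_points
    (d : ℕ) (f : EuclideanSpace ℝ (Fin d) → ℝ)
    (hf : ContDiff ℝ 1 f)
    (γ α ρ δt : ℝ) (hγ : 0 < γ) (hα : 0 < α) (hρ : 0 < ρ) (hδt : 0 < δt)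
    (x p ξ : EuclideanSpace ℝ (Fin d)) (hξ : ∀ i, 0 ≤ ξ i) :
    ((∀ i, Real.exp (-(γ + ξ i) * δt) * p i - δt * gradient f x i = p i) ∧
     (∀ i, x i + δt * (Real.exp (-(γ + ξ i) * δt) * p i) -
        δt ^ 2 * gradient f x i = x i) ∧
     (∀ i, Real.exp (-α * δt) *
        Real.sqrt ((ξ i) ^ 2 + (1 - Real.exp (-2 * ξ i * δt)) * (p i) ^ 2 / ρ)
          = ξ i)) ↔
    (p = 0 ∧ ξ = 0 ∧ gradient f x = 0) := by
  constructor
  · rintro ⟨h1, h2, h3⟩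
    -- From h2: e^{-(γ+ξᵢ)δt} pᵢ = δt * gᵢ
    have hep : ∀ i, Real.exp (-(γ + ξ i) * δt) * p i = δt * gradient f x i := by
      intro i
      have := h2 i
      have h' : δt * (Real.exp (-(γ + ξ i) * δt) * p i) = δt ^ 2 * gradient f x i := by
        linarith
      exact mul_left_cancel₀ hδt.ne' (h'.trans (by ring))
    have hp0 : ∀ i, p i = 0 := by
      intro i
      have := h1 i
      rw [hep i] at this
      linarith
    have hg0 : ∀ i, gradient f x i = 0 := by
      intro i
      have := hep i
      rw [hp0 i, mul_zero] at this
      have := this.symm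
      exact (mul_eq_zero.mp this).resolve_left hδt.ne'
    have hξ0 : ∀ i, ξ i = 0 := by
      intro i
      have h := h3 i
      rw [hp0 i] at h
      simp only [ne_eq, zero_pow, mul_zero, zero_div, add_zero] at h
      rw [zero_pow (by norm_num), mul_zero, zero_div, add_zero,
        Real.sqrt_sq (hξ i)] at h
      by_contra hne
      have hξpos : 0 < ξ i := lt_of_le_of_ne (hξ i) (Ne.symm hne)
      have hlt : Real.exp (-α * δt) < 1 := by
        rw [Real.exp_lt_one_iff]
        nlinarith
      nlinarith [Real.exp_pos (-α * δt)]
    refine ⟨?_, ?_, ?_⟩ <;> ext i <;> simp [hp0, hξ0, hg0]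
  · rintro ⟨hp, hξ', hg⟩
    subst hp hξ'
    rw [hg]
    refine ⟨?_, ?_, ?_⟩ <;> intro i <;> simp
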